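/- arXiv:1201.4024 — 2 statements merged into one kernel-verified Lean document; each statement's English description precedes it below -/
import Mathlib

section
/- Let X be the dual space of a separable Banach space, Y a Banach space, k a natural number, and φ=(φ_j)_{j=0,…,k} a vector of C-admissible weight functions on X. Then the weighted space B^φ_k(X;Y), equipped with the norm ‖f‖_{φ,k}, is a Banach space (i.e., it is complete). -/
/- STATEMENT 0: Completeness of the weighted space `B^φ_k(X;Y)` for a vector
`φ = (φ_j)_{j=0,…,k}` of C-admissible weight functions on the dual `X = W*` of a
separable Banach space `W`, with values in a Banach space `Y`.
"Banach space" is rendered as: every Cauchy sequence for the norm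
`‖f‖_{φ,k} = Σ_{j≤k} sup_x φ_j(x)⁻¹ ‖D^j f(x)‖` has a limit in the space. -/

noncomputable section

open Metric

/-- A C-admissible weight function on the dual `X = W*`: bounded below by a positive
constant, weak-* lower semicontinuous, and bounded on a closed ball around each point. -/
structure IsCAdmissible {W : Type*} [NormedAddCommGroup W] [NormedSpace ℝ W]
    (φ : StrongDual ℝ W → ℝ) : Prop where
  bounded_below : ∃ δ : ℝ, 0 < δ ∧ ∀ x, δ ≤ φ x
  weakStar_lsc : LowerSemicontinuous fun x : WeakDual ℝ W => φ (WeakDual.toStrongDual x)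
  loc_bounded : ∀ x : StrongDual ℝ W, ∃ ε : ℝ, 0 < ε ∧
    ∃ M : ℝ, ∀ y ∈ closedBall x ε, φ y ≤ M

/-- Membership in `B^φ_k(X;Y)`: `k` times continuously Fréchet differentiable with
all derivatives of order `j ≤ k` bounded by the weight `φ_j`. -/
def MemBk {X Y : Type*} [NormedAddCommGroup X] [NormedSpace ℝ X]
    [NormedAddCommGroup Y] [NormedSpace ℝ Y]
    (k : ℕ) (φ : ℕ → X → ℝ) (f : X → Y) : Prop :=
  ContDiff ℝ (k : ℕ) f ∧
    ∀ j ≤ k, ∃ C : ℝ, ∀ x, ‖iteratedFDeriv ℝ j f x‖ ≤ C * φ j x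

open Filter Topology Uniformity in
set_option maxHeartbeats 1000000 in
theorem weighted_Ck_space_is_complete
    (W : Type*) [NormedAddCommGroup W] [NormedSpace ℝ W] [CompleteSpace W]
    [TopologicalSpace.SeparableSpace W]
    (Y : Type*) [NormedAddCommGroup Y] [NormedSpace ℝ Y] [CompleteSpace Y]
    (k : ℕ) (φ : ℕ → StrongDual ℝ W → ℝ)
    (hφ : ∀ j ≤ k, IsCAdmissible (φ j))
    -- a Cauchy sequence in `B^φ_k(X;Y)`:
    (f : ℕ → StrongDual ℝ W → Y)
    (hf : ∀ n, MemBk k φ (f n))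
    (hCauchy : ∀ ε : ℝ, 0 < ε → ∃ N : ℕ, ∀ m ≥ N, ∀ n ≥ N, ∀ j ≤ k,
      ∀ x, ‖iteratedFDeriv ℝ j (f m - f n) x‖ ≤ ε * φ j x) :
    -- it converges in the `φ`-norm to an element of `B^φ_k(X;Y)`:
    ∃ g : StrongDual ℝ W → Y, MemBk k φ g ∧
      ∀ ε : ℝ, 0 < ε → ∃ N : ℕ, ∀ n ≥ N, ∀ j ≤ k,
        ∀ x, ‖iteratedFDeriv ℝ j (f n - g) x‖ ≤ ε * φ j x := by
  classical
  have hφpos : ∀ j, j ≤ k → ∀ x, 0 < φ j x := by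
    intro j hj x
    obtain ⟨δ, hδ, hδle⟩ := (hφ j hj).bounded_below
    exact hδ.trans_le (hδle x)
  -- Cauchy condition restated with differences of derivatives
  have hC : ∀ ε : ℝ, 0 < ε → ∃ N : ℕ, ∀ m ≥ N, ∀ n ≥ N, ∀ j ≤ k, ∀ x,
      ‖iteratedFDeriv ℝ j (f m) x - iteratedFDeriv ℝ j (f n) x‖ ≤ ε * φ j x := by
    intro ε hε
    obtain ⟨N, hN⟩ := hCauchy ε hε
    refine ⟨N, fun m hm n hn j hj x => ?_⟩
    have hj' : (j : WithTop ℕ∞) ≤ (k : ℕ) := by exact_mod_cast hj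
    have h := hN m hm n hn j hj x
    rwa [sub_eq_add_neg, iteratedFDeriv_add_apply (g := -(f n)) ((hf m).1.of_le hj').contDiffAt
      (((hf n).1.of_le hj').neg).contDiffAt, iteratedFDeriv_neg_apply, ← sub_eq_add_neg] at h
  -- pointwise limits of the derivatives
  have key : ∀ (j : ℕ) (x : StrongDual ℝ W),
      ∃ L : ContinuousMultilinearMap ℝ (fun _ : Fin j => StrongDual ℝ W) Y,
      j ≤ k → Tendsto (fun n => iteratedFDeriv ℝ j (f n) x) atTop (𝓝 L) := by
    intro j x
    by_cases hj : j ≤ k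
    · have hxpos := hφpos j hj x
      have hxne : φ j x ≠ 0 := hxpos.ne'
      have hcau : CauchySeq (fun n => iteratedFDeriv ℝ j (f n) x) := by
        rw [Metric.cauchySeq_iff]
        intro ε hε
        obtain ⟨N, hN⟩ := hC (ε / (2 * φ j x)) (by positivity)
        refine ⟨N, fun m hm n hn => ?_⟩
        calc dist (iteratedFDeriv ℝ j (f m) x) (iteratedFDeriv ℝ j (f n) x)
            = ‖iteratedFDeriv ℝ j (f m) x - iteratedFDeriv ℝ j (f n) x‖ := dist_eq_norm _ _
          _ ≤ ε / (2 * φ j x) * φ j x := hN m hm n hn j hj x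
          _ = ε / 2 := by field_simp
          _ < ε := by linarith
      obtain ⟨L, hL⟩ := cauchySeq_tendsto_of_complete hcau
      exact ⟨L, fun _ => hL⟩
    · exact ⟨0, fun h => absurd h hj⟩
  choose G hG using key
  -- passing norms to the limit
  have hlim : ∀ j, j ≤ k → ∀ (x : StrongDual ℝ W)
      (v : ContinuousMultilinearMap ℝ (fun _ : Fin j => StrongDual ℝ W) Y) (c : ℝ),
      (∀ᶠ m in atTop, ‖iteratedFDeriv ℝ j (f m) x - v‖ ≤ c) → ‖G j x - v‖ ≤ c := by
    intro j hj x v c h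
    exact le_of_tendsto (((hG j x hj).sub tendsto_const_nhds).norm) h
  -- locally uniform convergence of the derivatives
  have hLU : ∀ j, j ≤ k →
      TendstoLocallyUniformly (fun n x => iteratedFDeriv ℝ j (f n) x) (G j) atTop := by
    intro j hj
    rw [Metric.tendstoLocallyUniformly_iff]
    intro ε hε x
    obtain ⟨r, hr, M, hM⟩ := (hφ j hj).loc_bounded x
    have hMpos : 0 < M := lt_of_lt_of_le (hφpos j hj x) (hM x (mem_closedBall_self hr.le))
    refine ⟨closedBall x r, closedBall_mem_nhds x hr, ?_⟩
    obtain ⟨N, hN⟩ := hC (ε / (2 * M)) (by positivity)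
    filter_upwards [eventually_ge_atTop N] with n hn
    intro y hy
    rw [dist_eq_norm]
    have hb : ‖G j y - iteratedFDeriv ℝ j (f n) y‖ ≤ ε / 2 := by
      apply hlim j hj
      filter_upwards [eventually_ge_atTop N] with m hm
      calc ‖iteratedFDeriv ℝ j (f m) y - iteratedFDeriv ℝ j (f n) y‖
          ≤ ε / (2 * M) * φ j y := hN m hm n hn j hj y
        _ ≤ ε / (2 * M) * M := by
            have h1 := hM y hy
            have h2 : 0 ≤ ε / (2 * M) := by positivity
            exact mul_le_mul_of_nonneg_left h1 h2
        _ = ε / 2 := by field_simp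
    linarith
  -- the differential relations for the limits
  have hFD : ∀ j, j + 1 ≤ k → ∀ x : StrongDual ℝ W,
      HasFDerivAt (G j)
        ((continuousMultilinearCurryLeftEquiv ℝ
          (fun _ : Fin (j + 1) => StrongDual ℝ W) Y) (G (j + 1) x)) x := by
    intro j hj x
    set e := continuousMultilinearCurryLeftEquiv ℝ
      (fun _ : Fin (j + 1) => StrongDual ℝ W) Y with he
    have hder : ∀ n, ∀ z : StrongDual ℝ W,
        HasFDerivAt (fun y => iteratedFDeriv ℝ j (f n) y)
          (e (iteratedFDeriv ℝ (j + 1) (f n) z)) z := by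
      intro n z
      have hdiff : DifferentiableAt ℝ (iteratedFDeriv ℝ j (f n)) z :=
        ((hf n).1.differentiable_iteratedFDeriv (by exact_mod_cast hj)) z
      have h := hdiff.hasFDerivAt
      rwa [show fderiv ℝ (iteratedFDeriv ℝ j (f n)) z
          = e (iteratedFDeriv ℝ (j + 1) (f n) z) from congrFun fderiv_iteratedFDeriv z] at h
    have hLU' : TendstoLocallyUniformlyOn
        (fun n y => e (iteratedFDeriv ℝ (j + 1) (f n) y))
        (fun y => e (G (j + 1) y)) atTop Set.univ := by
      rw [tendstoLocallyUniformlyOn_univ]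
      intro u hu y
      have hu' : ((fun p : (ContinuousMultilinearMap ℝ
            (fun _ : Fin (j + 1) => StrongDual ℝ W) Y) ×
            (ContinuousMultilinearMap ℝ (fun _ : Fin (j + 1) => StrongDual ℝ W) Y) =>
            (e p.1, e p.2)) ⁻¹' u) ∈ 𝓤 _ := e.isometry.uniformContinuous hu
      obtain ⟨t, ht, h2⟩ := hLU (j + 1) hj _ hu' y
      exact ⟨t, ht, h2.mono fun n hn z hz => hn z hz⟩
    exact hasFDerivAt_of_tendstoLocallyUniformlyOn isOpen_univ hLU'
      (fun n z _ => hder n z) (fun y _ => hG j y (Nat.le_of_succ_le hj)) (Set.mem_univ x)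
  -- the candidate limit function
  set g : StrongDual ℝ W → Y :=
    fun x => continuousMultilinearCurryFin0 ℝ (StrongDual ℝ W) Y (G 0 x) with hgdef
  -- identification of the iterated derivatives of g
  have hEq : ∀ j, j ≤ k → iteratedFDeriv ℝ j g = G j := by
    intro j
    induction j with
    | zero =>
      intro _
      funext x
      rw [iteratedFDeriv_zero_eq_comp]
      simp only [Function.comp_apply]
      exact (continuousMultilinearCurryFin0 ℝ (StrongDual ℝ W) Y).symm_apply_apply _
    | succ j ih =>
      intro hj
      have hj' : j ≤ k := Nat.le_of_succ_le hj
      funext x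
      rw [iteratedFDeriv_succ_eq_comp_left]
      simp only [Function.comp_apply]
      rw [ih hj', (hFD j hj x).fderiv]
      simp
  -- smoothness of the limits
  have hCD : ∀ d : ℕ, ∀ j, j + d ≤ k → ContDiff ℝ (d : ℕ) (G j) := by
    intro d
    induction d with
    | zero =>
      intro j hj
      rw [Nat.cast_zero, contDiff_zero]
      refine (hLU j (by omega)).continuous (Frequently.of_forall fun n => ?_)
      exact (hf n).1.continuous_iteratedFDeriv (by exact_mod_cast (by omega : j ≤ k))
    | succ d ih =>
      intro j hj
      have h1 : j + 1 ≤ k := by omega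
      rw [show ((d + 1 : ℕ) : WithTop ℕ∞) = (d : ℕ) + 1 by push_cast; ring,
        contDiff_succ_iff_fderiv]
      refine ⟨fun x => (hFD j h1 x).differentiableAt, by simp, ?_⟩
      have hfd : fderiv ℝ (G j) = fun x =>
          (continuousMultilinearCurryLeftEquiv ℝ
            (fun _ : Fin (j + 1) => StrongDual ℝ W) Y) (G (j + 1) x) :=
        funext fun x => (hFD j h1 x).fderiv
      rw [hfd]
      refine ContDiff.comp ?_ (ih (j + 1) (by omega))
      exact LinearIsometryEquiv.contDiff _
  have hgC : ContDiff ℝ (k : ℕ) g := by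
    refine ContDiff.comp ?_ (hCD k 0 (by omega))
    exact (continuousMultilinearCurryFin0 ℝ (StrongDual ℝ W)
        Y).toContinuousLinearEquiv.contDiff
  refine ⟨g, ⟨hgC, ?_⟩, ?_⟩
  · -- the weighted bounds for g
    intro j hj
    obtain ⟨N, hN⟩ := hC 1 one_pos
    obtain ⟨C, hCb⟩ := (hf N).2 j hj
    refine ⟨C + 1, fun x => ?_⟩
    rw [hEq j hj]
    have h1 : ‖G j x - iteratedFDeriv ℝ j (f N) x‖ ≤ 1 * φ j x := by
      apply hlim j hj
      filter_upwards [eventually_ge_atTop N] with m hm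
      exact hN m hm N le_rfl j hj x
    have h2 := norm_sub_norm_le (G j x) (iteratedFDeriv ℝ j (f N) x)
    have h3 := hCb x
    have h4 : (C + 1) * φ j x = C * φ j x + 1 * φ j x := by ring
    linarith
  · -- convergence in the weighted norm
    intro ε hε
    obtain ⟨N, hN⟩ := hC ε hε
    refine ⟨N, fun n hn j hj x => ?_⟩
    have hj' : (j : WithTop ℕ∞) ≤ (k : ℕ) := by exact_mod_cast hj
    have hsub : iteratedFDeriv ℝ j (f n - g) x
        = iteratedFDeriv ℝ j (f n) x - iteratedFDeriv ℝ j g x := by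
      rw [sub_eq_add_neg, iteratedFDeriv_add_apply (g := -g) ((hf n).1.of_le hj').contDiffAt
        ((hgC.of_le hj').neg).contDiffAt, iteratedFDeriv_neg_apply, ← sub_eq_add_neg]
    rw [hsub, hEq j hj, ← norm_neg, neg_sub]
    apply hlim j hj
    filter_upwards [eventually_ge_atTop N] with m hm
    exact hN m hm n hn j hj x

end
end

section
/- On X = ℝ with the admissible weight function ψ(x) := 1 + x² χ_{(−∞,0)}(x) + x^{−2} χ_{(0,∞)}(x), there exists a Cauchy sequence in the weighted space B^ψ_1(ℝ) (with weight vector (ψ, ψ)) that has no limit in B^ψ_1(ℝ); concretely, the sequence of smooth monotone functions f_n with f_n(x) = 0 for x ≤ 0, f_n(x) = 1 for x ≥ 1/n, 0 ≤ f_n ≤ 1, and |f_n'| ≤ Cn on (0, 1/n) (e.g. f_n(x) = f_1(nx)) is Cauchy in B^ψ_1(ℝ), yet its only possible limit (under pointwise evaluation) is the indicator function of (0,∞), which is not continuous and hence not in B^ψ_1(ℝ). In particular, B^ψ_1(ℝ) is not complete for this ψ, which is admissible but not C-admissible. -/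
/- STATEMENT 19: on `X = ℝ` with the admissible (but not C-admissible) weight
`ψ(x) = 1 + x²χ_{(−∞,0)}(x) + x^{−2}χ_{(0,∞)}(x)`, the weighted space `B^ψ_1(ℝ)`
(weight vector `(ψ,ψ)`) is not complete: the smooth monotone cut-off functions `f_n`
(`f_n = 0` on `(−∞,0]`, `f_n = 1` on `[1/n,∞)`, `0 ≤ f_n ≤ 1`, `|f_n'| ≤ Cn`) form a
Cauchy sequence whose pointwise limit is the indicator of `(0,∞)`, and which has no
limit in `B^ψ_1(ℝ)`. -/

noncomputable section

open Filter Topology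

namespace Stmt19

/-- The weight `ψ(x) = 1 + x² χ_{(−∞,0)}(x) + x^{−2} χ_{(0,∞)}(x)`. -/
def psi (x : ℝ) : ℝ :=
  1 + (if x < 0 then x ^ 2 else 0) + (if 0 < x then (x ^ 2)⁻¹ else 0)

/-- Membership in `B^{(ψ,ψ)}_1(ℝ)`: continuously differentiable with `f` and `f'`
bounded by multiples of `ψ`. -/
def MemB1 (f : ℝ → ℝ) : Prop :=
  ContDiff ℝ 1 f ∧ (∃ C : ℝ, ∀ x, |f x| ≤ C * psi x) ∧
    ∃ C : ℝ, ∀ x, |deriv f x| ≤ C * psi x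

/-! ### Auxiliary lemmas -/

lemma glue_mono : Monotone expNegInvGlue := by
  intro x y hxy
  rcases le_or_gt x 0 with hx | hx
  · rw [expNegInvGlue.zero_of_nonpos hx]; exact expNegInvGlue.nonneg y
  · have hy : 0 < y := hx.trans_le hxy
    simp only [expNegInvGlue, if_neg hx.not_ge, if_neg hy.not_ge]
    exact Real.exp_le_exp.2 (neg_le_neg (inv_anti₀ hx hxy))

lemma st_mono : Monotone Real.smoothTransition := by
  intro x y hxy
  unfold Real.smoothTransition
  rw [div_le_div_iff₀ (Real.smoothTransition.pos_denom x) (Real.smoothTransition.pos_denom y)]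
  have h1 : expNegInvGlue x ≤ expNegInvGlue y := glue_mono hxy
  have h2 : expNegInvGlue (1 - y) ≤ expNegInvGlue (1 - x) := glue_mono (by linarith)
  nlinarith [mul_le_mul h1 h2 (expNegInvGlue.nonneg (1 - y)) (expNegInvGlue.nonneg y),
    expNegInvGlue.nonneg x, expNegInvGlue.nonneg y]

lemma deriv_zero_of_left_const {f : ℝ → ℝ} {a c : ℝ} (hf : DifferentiableAt ℝ f a)
    (h : ∀ x ≤ a, f x = c) : deriv f a = 0 := by
  have hd := hf.hasDerivAt
  rw [hasDerivAt_iff_tendsto_slope] at hd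
  have h2 : Tendsto (slope f a) (𝓝[<] a) (𝓝 (deriv f a)) :=
    hd.mono_left (nhdsWithin_mono _ fun y hy => ne_of_lt hy)
  have h3 : Tendsto (slope f a) (𝓝[<] a) (𝓝 0) := by
    refine tendsto_const_nhds.congr' ?_
    filter_upwards [self_mem_nhdsWithin] with x (hx : x < a)
    simp [slope, h x hx.le, h a le_rfl]
  exact (tendsto_nhds_unique h2 h3)

lemma deriv_zero_of_right_const {f : ℝ → ℝ} {a c : ℝ} (hf : DifferentiableAt ℝ f a)
    (h : ∀ x, a ≤ x → f x = c) : deriv f a = 0 := by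
  have hd := hf.hasDerivAt
  rw [hasDerivAt_iff_tendsto_slope] at hd
  have h2 : Tendsto (slope f a) (𝓝[>] a) (𝓝 (deriv f a)) :=
    hd.mono_left (nhdsWithin_mono _ fun y hy => ne_of_gt hy)
  have h3 : Tendsto (slope f a) (𝓝[>] a) (𝓝 0) := by
    refine tendsto_const_nhds.congr' ?_
    filter_upwards [self_mem_nhdsWithin] with x (hx : a < x)
    simp [slope, h x hx.le, h a le_rfl]
  exact (tendsto_nhds_unique h2 h3)

lemma st_diff : Differentiable ℝ Real.smoothTransition :=
  (Real.smoothTransition.contDiff (n := 1)).differentiable (by norm_num)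

lemma st_deriv_nonpos {x : ℝ} (hx : x ≤ 0) : deriv Real.smoothTransition x = 0 :=
  deriv_zero_of_left_const (st_diff x) fun y hy =>
    Real.smoothTransition.zero_of_nonpos (hy.trans hx)

lemma st_deriv_one_le {x : ℝ} (hx : 1 ≤ x) : deriv Real.smoothTransition x = 0 :=
  deriv_zero_of_right_const (st_diff x) fun y hy =>
    Real.smoothTransition.one_of_one_le (hx.trans hy)

lemma st_deriv_bound : ∃ C : ℝ, 0 ≤ C ∧ ∀ x, |deriv Real.smoothTransition x| ≤ C := by
  have hcont : Continuous (deriv Real.smoothTransition) :=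
    (Real.smoothTransition.contDiff (n := ⊤)).continuous_deriv (by exact_mod_cast le_top)
  obtain ⟨C, hC⟩ := isCompact_Icc.exists_bound_of_continuousOn
    (hcont.continuousOn (s := Set.Icc (0:ℝ) 1))
  refine ⟨max C 0, le_max_right _ _, fun x => ?_⟩
  rcases lt_or_ge x 0 with hx | hx
  · rw [st_deriv_nonpos hx.le]; simpa using le_max_right C 0
  rcases le_or_gt x 1 with hx1 | hx1
  · exact le_trans (by simpa [Real.norm_eq_abs] using hC x ⟨hx, hx1⟩) (le_max_left _ _)
  · rw [st_deriv_one_le hx1.le]; simpa using le_max_right C 0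

lemma one_le_psi (x : ℝ) : 1 ≤ psi x := by
  unfold psi
  have h1 : (0:ℝ) ≤ if x < 0 then x ^ 2 else 0 := by split_ifs <;> positivity
  have h2 : (0:ℝ) ≤ if 0 < x then (x ^ 2)⁻¹ else 0 := by split_ifs <;> positivity
  linarith

lemma psi_lb {x : ℝ} (hx : 0 < x) : (x ^ 2)⁻¹ ≤ psi x := by
  unfold psi
  rw [if_neg (not_lt.2 hx.le), if_pos hx]
  linarith

theorem weighted_C1_space_not_complete :
    ∃ f : ℕ → ℝ → ℝ,
      -- smooth monotone cut-offs between 0 and 1/(n+1)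
      (∀ n, ContDiff ℝ (⊤ : ℕ∞) (f n)) ∧
      (∀ n, Monotone (f n)) ∧
      (∀ (n : ℕ) (x : ℝ), 0 ≤ f n x ∧ f n x ≤ 1) ∧
      (∀ (n : ℕ) (x : ℝ), x ≤ 0 → f n x = 0) ∧
      (∀ (n : ℕ) (x : ℝ), ((n : ℝ) + 1)⁻¹ ≤ x → f n x = 1) ∧
      (∃ C : ℝ, ∀ n, ∀ x : ℝ, |deriv (f n) x| ≤ C * ((n : ℝ) + 1)) ∧
      -- each `f n` lies in `B^ψ_1(ℝ)`
      (∀ n, MemB1 (f n)) ∧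
      -- the sequence is Cauchy for the norm `‖·‖_{(ψ,ψ),1}`
      (∀ ε : ℝ, 0 < ε → ∃ K : ℕ, ∀ p ≥ K, ∀ q ≥ K, ∀ x : ℝ,
        |f p x - f q x| ≤ ε * psi x ∧ |deriv (f p) x - deriv (f q) x| ≤ ε * psi x) ∧
      -- its only candidate limit (pointwise) is the indicator of `(0,∞)`,
      -- which is not continuous
      (∀ x : ℝ, Tendsto (fun n => f n x) atTop
        (𝓝 (Set.indicator (Set.Ioi (0 : ℝ)) (fun _ => (1 : ℝ)) x))) ∧
      ¬ Continuous (Set.indicator (Set.Ioi (0 : ℝ)) fun _ => (1 : ℝ)) ∧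
      -- and the sequence has NO limit in `B^ψ_1(ℝ)`
      ¬ ∃ g : ℝ → ℝ, MemB1 g ∧
          ∀ ε : ℝ, 0 < ε → ∃ K : ℕ, ∀ n ≥ K, ∀ x : ℝ,
            |f n x - g x| ≤ ε * psi x ∧ |deriv (f n) x - deriv g x| ≤ ε * psi x := by
  classical
  obtain ⟨C₀, hC₀, hCb⟩ := st_deriv_bound
  set f : ℕ → ℝ → ℝ := fun n x => Real.smoothTransition (((n : ℝ) + 1) * x) with hfdef
  have hcpos : ∀ n : ℕ, (0:ℝ) < (n:ℝ) + 1 := fun n => by positivity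
  have hderiv : ∀ (n : ℕ) (x : ℝ),
      HasDerivAt (f n) (deriv Real.smoothTransition (((n:ℝ)+1) * x) * ((n:ℝ)+1)) x := by
    intro n x
    exact ((st_diff _).hasDerivAt).comp x (by simpa using (hasDerivAt_id x).const_mul ((n:ℝ)+1))
  have hderiv' : ∀ (n : ℕ) (x : ℝ),
      deriv (f n) x = deriv Real.smoothTransition (((n:ℝ)+1)*x) * ((n:ℝ)+1) :=
    fun n x => (hderiv n x).deriv
  have hone_le : ∀ (n : ℕ) (x : ℝ), ((n:ℝ)+1)⁻¹ ≤ x → 1 ≤ ((n:ℝ)+1) * x := by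
    intro n x hx
    have := mul_le_mul_of_nonneg_left hx (hcpos n).le
    rwa [mul_inv_cancel₀ (hcpos n).ne'] at this
  have hzero : ∀ (n : ℕ) (x : ℝ), x ≤ 0 → f n x = 0 := fun n x hx =>
    Real.smoothTransition.zero_of_nonpos (by nlinarith [hcpos n])
  have hone : ∀ (n : ℕ) (x : ℝ), ((n:ℝ)+1)⁻¹ ≤ x → f n x = 1 := fun n x hx =>
    Real.smoothTransition.one_of_one_le (hone_le n x hx)
  have hdzeroL : ∀ (n : ℕ) (x : ℝ), x ≤ 0 → deriv (f n) x = 0 := by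
    intro n x hx
    rw [hderiv' n x, st_deriv_nonpos (by nlinarith [hcpos n] : ((n:ℝ)+1)*x ≤ 0), zero_mul]
  have hdzeroR : ∀ (n : ℕ) (x : ℝ), ((n:ℝ)+1)⁻¹ ≤ x → deriv (f n) x = 0 := by
    intro n x hx
    rw [hderiv' n x, st_deriv_one_le (hone_le n x hx), zero_mul]
  have hdb : ∀ (n : ℕ) (x : ℝ), |deriv (f n) x| ≤ C₀ * ((n:ℝ)+1) := by
    intro n x
    rw [hderiv' n x, abs_mul, abs_of_pos (hcpos n)]
    exact mul_le_mul_of_nonneg_right (hCb _) (hcpos n).le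
  have hkey : ∀ (n : ℕ) (x : ℝ), 0 < x → x < ((n:ℝ)+1)⁻¹ → ((n:ℝ)+1)^2 ≤ psi x := by
    intro n x hx hlt
    have hx2 : (0:ℝ) < x^2 := by positivity
    have h1 : x^2 < (((n:ℝ)+1)⁻¹)^2 := by
      apply pow_lt_pow_left₀ hlt hx.le
      norm_num
    rw [inv_pow] at h1
    have h2 := inv_strictAnti₀ hx2 h1
    rw [inv_inv] at h2
    exact le_trans h2.le (psi_lb hx)
  -- pointwise limit
  have hpt : ∀ x : ℝ, Tendsto (fun n => f n x) atTop
      (𝓝 (Set.indicator (Set.Ioi (0 : ℝ)) (fun _ => (1 : ℝ)) x)) := by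
    intro x
    rcases le_or_gt x 0 with hx | hx
    · have hind : Set.indicator (Set.Ioi (0 : ℝ)) (fun _ => (1 : ℝ)) x = 0 :=
        Set.indicator_of_notMem (by simpa using hx) _
      rw [hind]
      exact tendsto_const_nhds.congr fun n => (hzero n x hx).symm
    · have hind : Set.indicator (Set.Ioi (0 : ℝ)) (fun _ => (1 : ℝ)) x = 1 :=
        Set.indicator_of_mem hx _
      rw [hind]
      obtain ⟨N, hN⟩ := exists_nat_ge x⁻¹
      refine Tendsto.congr' ?_ tendsto_const_nhds
      filter_upwards [eventually_ge_atTop N] with n hn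
      refine (hone n x ?_).symm
      have h1 : x⁻¹ ≤ (n:ℝ)+1 := by
        have hNn : (N:ℝ) ≤ (n:ℝ) := Nat.cast_le.2 hn
        linarith
      have := inv_anti₀ (inv_pos.2 hx) h1
      rwa [inv_inv] at this
  -- non-continuity of the indicator
  have hnc : ¬ Continuous (Set.indicator (Set.Ioi (0 : ℝ)) fun _ => (1 : ℝ)) := by
    intro hcont
    have h0 : Set.indicator (Set.Ioi (0 : ℝ)) (fun _ => (1 : ℝ)) 0 = 0 :=
      Set.indicator_of_notMem (by simp) _
    have hseq : Tendsto (fun n : ℕ => ((n:ℝ)+1)⁻¹) atTop (𝓝 0) := by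
      simpa only [one_div] using tendsto_one_div_add_atTop_nhds_zero_nat (𝕜 := ℝ)
    have h1 : Tendsto (fun n : ℕ =>
        Set.indicator (Set.Ioi (0 : ℝ)) (fun _ => (1 : ℝ)) ((n:ℝ)+1)⁻¹) atTop (𝓝 0) := by
      have := (hcont.tendsto 0).comp hseq
      rwa [h0] at this
    have h2 : Tendsto (fun _ : ℕ => (1:ℝ)) atTop (𝓝 0) := by
      refine h1.congr fun n => ?_
      exact Set.indicator_of_mem (Set.mem_Ioi.2 (by positivity)) _
    have := tendsto_nhds_unique h2 tendsto_const_nhds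
    norm_num at this
  refine ⟨f, ?_, ?_, ?_, hzero, hone, ⟨C₀, hdb⟩, ?_, ?_, hpt, hnc, ?_⟩
  · intro n
    exact Real.smoothTransition.contDiff.comp (contDiff_const.mul contDiff_id)
  · intro n
    exact st_mono.comp fun a b hab => mul_le_mul_of_nonneg_left hab (hcpos n).le
  · exact fun n x => ⟨Real.smoothTransition.nonneg _, Real.smoothTransition.le_one _⟩
  · -- membership in B¹
    intro n
    refine ⟨Real.smoothTransition.contDiff.comp (contDiff_const.mul contDiff_id),
      ⟨1, fun x => ?_⟩, ⟨C₀ * ((n:ℝ)+1), fun x => ?_⟩⟩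
    · rw [one_mul]
      refine le_trans (abs_le.2 ⟨?_, Real.smoothTransition.le_one _⟩) (one_le_psi x)
      linarith [Real.smoothTransition.nonneg (((n:ℝ)+1)*x)]
    · refine le_trans (hdb n x) ?_
      have h1 : 0 ≤ C₀ * ((n:ℝ)+1) := by positivity
      nlinarith [one_le_psi x]
  · -- Cauchy
    intro ε hε
    obtain ⟨K, hK⟩ := exists_nat_ge (max (2/ε) (2*C₀/ε))
    have hK1 : 2/ε ≤ (K:ℝ) := le_trans (le_max_left _ _) hK
    have hK2 : 2*C₀/ε ≤ (K:ℝ) := le_trans (le_max_right _ _) hK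
    have hK1' : 2 ≤ (K:ℝ) * ε := by rwa [div_le_iff₀ hε] at hK1
    refine ⟨K, fun p hp q hq x => ?_⟩
    have hclaim : ∀ n ≥ K, |deriv (f n) x| ≤ ε/2 * psi x := by
      intro n hn
      rcases le_or_gt x 0 with hx | hx
      · rw [hdzeroL n x hx, abs_zero]; nlinarith [one_le_psi x]
      rcases le_or_gt (((n:ℝ)+1)⁻¹) x with hx1 | hx1
      · rw [hdzeroR n x hx1, abs_zero]; nlinarith [one_le_psi x]
      · have hψ := hkey n x hx hx1
        have hb := hdb n x
        have hn' : 2*C₀/ε ≤ (n:ℝ) := le_trans hK2 (by exact_mod_cast hn)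
        have h2C : 2*C₀ ≤ (n:ℝ) * ε := by rwa [div_le_iff₀ hε] at hn'
        have hnn : (0:ℝ) ≤ (n:ℝ) := Nat.cast_nonneg n
        nlinarith [mul_le_mul_of_nonneg_left hψ (by linarith : (0:ℝ) ≤ ε/2),
          mul_nonneg hε.le hnn, mul_nonneg (mul_nonneg hε.le hnn) hnn]
    constructor
    · rcases le_or_gt x 0 with hx | hx
      · rw [hzero p x hx, hzero q x hx, sub_zero, abs_zero]
        nlinarith [one_le_psi x]
      rcases le_or_gt (((K:ℝ)+1)⁻¹) x with hx1 | hx1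
      · have hinvp : ((p:ℝ)+1)⁻¹ ≤ x := le_trans (inv_anti₀ (hcpos K)
          (by exact_mod_cast by linarith [(Nat.cast_le (α := ℝ)).2 hp])) hx1
        have hinvq : ((q:ℝ)+1)⁻¹ ≤ x := le_trans (inv_anti₀ (hcpos K)
          (by exact_mod_cast by linarith [(Nat.cast_le (α := ℝ)).2 hq])) hx1
        rw [hone p x hinvp, hone q x hinvq, sub_self, abs_zero]
        nlinarith [one_le_psi x]
      · have hψ := hkey K x hx hx1
        have h1 : |f p x - f q x| ≤ 1 := by
          rw [abs_le]
          constructor <;>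
            nlinarith [Real.smoothTransition.nonneg (((p:ℝ)+1)*x),
              Real.smoothTransition.le_one (((p:ℝ)+1)*x),
              Real.smoothTransition.nonneg (((q:ℝ)+1)*x),
              Real.smoothTransition.le_one (((q:ℝ)+1)*x)]
        have hKn : (0:ℝ) ≤ (K:ℝ) := Nat.cast_nonneg K
        nlinarith [mul_le_mul_of_nonneg_left hψ hε.le,
          mul_nonneg hε.le hKn, mul_nonneg (mul_nonneg hε.le hKn) hKn]
    · calc |deriv (f p) x - deriv (f q) x| ≤ |deriv (f p) x| + |deriv (f q) x| := abs_sub _ _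
        _ ≤ ε/2 * psi x + ε/2 * psi x := add_le_add (hclaim p hp) (hclaim q hq)
        _ = ε * psi x := by ring
  · -- no limit
    rintro ⟨g, hg, hconv⟩
    have hψpos : ∀ x : ℝ, 0 < psi x := fun x => lt_of_lt_of_le one_pos (one_le_psi x)
    have hgp : ∀ x : ℝ, Tendsto (fun n => f n x) atTop (𝓝 (g x)) := by
      intro x
      rw [Metric.tendsto_atTop]
      intro ε hε
      obtain ⟨K, hK⟩ := hconv (ε / (2 * psi x)) (div_pos hε (by linarith [hψpos x]))
      refine ⟨K, fun n hn => ?_⟩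
      have h1 := (hK n hn x).1
      rw [Real.dist_eq]
      have h2 : ε / (2 * psi x) * psi x = ε / 2 := by
        have hne : psi x ≠ 0 := (hψpos x).ne'
        field_simp
      rw [h2] at h1
      linarith
    have heq : g = Set.indicator (Set.Ioi (0 : ℝ)) fun _ => (1 : ℝ) :=
      funext fun x => tendsto_nhds_unique (hgp x) (hpt x)
    exact hnc (heq ▸ hg.1.continuous)

end Stmt19

end
end
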